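/- The function K̃_ℓ(z,w) = (ℓ/((ℓ+1)·ℓ!))·⟨z,w⟩^{ℓ-1}·(⟨z,w⟩ I_d − w̄ zᵀ) is the reproducing kernel of the subspace V_ℓ = {f ∈ ℂ^d ⊗ P_ℓ : Σᵢ zᵢfᵢ = 0} of the Fischer-Fock space; i.e., K̃_ℓ(·,w)ζ ∈ V_ℓ for all w ∈ ℂ^d, ζ ∈ ℂ^d, and ⟨f, K̃_ℓ(·,w)ζ⟩_{F_ℓ} = ⟨f(w), ζ⟩ for all f ∈ V_ℓ. -/

import Mathlib

open MvPolynomial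
open Finset
open scoped ComplexConjugate

/-- The Fischer-Fock inner product on polynomials in `d` complex variables, determined by
`⟨z^α, z^β⟩_F = α! δ_{α,β}`. -/
noncomputable def fock (d : ℕ) (p q : MvPolynomial (Fin d) ℂ) : ℂ :=
  ∑ α ∈ p.support ∪ q.support,
    ((∏ i, (α i).factorial : ℕ) : ℂ) * p.coeff α * conj (q.coeff α)

variable {d : ℕ}

lemma fock_eq_left (p q : MvPolynomial (Fin d) ℂ) :
    fock d p q = ∑ α ∈ p.support,
      ((∏ i, (α i).factorial : ℕ) : ℂ) * p.coeff α * conj (q.coeff α) := by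
  refine (Finset.sum_subset Finset.subset_union_left ?_).symm
  intro x _ hx
  rw [MvPolynomial.notMem_support_iff] at hx
  simp [hx]

lemma fock_eq_right (p q : MvPolynomial (Fin d) ℂ) :
    fock d p q = ∑ α ∈ q.support,
      ((∏ i, (α i).factorial : ℕ) : ℂ) * p.coeff α * conj (q.coeff α) := by
  refine (Finset.sum_subset Finset.subset_union_right ?_).symm
  intro x _ hx
  rw [MvPolynomial.notMem_support_iff] at hx
  simp [hx]

lemma fock_subset_left {p : MvPolynomial (Fin d) ℂ} (q : MvPolynomial (Fin d) ℂ)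
    {t : Finset (Fin d →₀ ℕ)} (h : p.support ⊆ t) :
    fock d p q = ∑ α ∈ t,
      ((∏ i, (α i).factorial : ℕ) : ℂ) * p.coeff α * conj (q.coeff α) := by
  rw [fock_eq_left]
  exact Finset.sum_subset h fun x _ hx => by
    simp [MvPolynomial.notMem_support_iff.mp hx]

lemma fock_subset_right (p : MvPolynomial (Fin d) ℂ) {q : MvPolynomial (Fin d) ℂ}
    {t : Finset (Fin d →₀ ℕ)} (h : q.support ⊆ t) :
    fock d p q = ∑ α ∈ t,
      ((∏ i, (α i).factorial : ℕ) : ℂ) * p.coeff α * conj (q.coeff α) := by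
  rw [fock_eq_right]
  exact Finset.sum_subset h fun x _ hx => by
    simp [MvPolynomial.notMem_support_iff.mp hx]

lemma fock_conj (p q : MvPolynomial (Fin d) ℂ) : fock d q p = conj (fock d p q) := by
  unfold fock
  rw [Finset.union_comm, map_sum]
  refine Finset.sum_congr rfl fun α _ => ?_
  simp only [map_mul, Complex.conj_conj, map_natCast]
  ring

lemma fock_add_right (p q r : MvPolynomial (Fin d) ℂ) :
    fock d p (q + r) = fock d p q + fock d p r := by
  simp only [fock_eq_left, MvPolynomial.coeff_add, map_add, mul_add, Finset.sum_add_distrib]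

lemma fock_sub_right (p q r : MvPolynomial (Fin d) ℂ) :
    fock d p (q - r) = fock d p q - fock d p r := by
  simp only [fock_eq_left, MvPolynomial.coeff_sub, map_sub, mul_sub, Finset.sum_sub_distrib]

lemma fock_C_mul_right (p q : MvPolynomial (Fin d) ℂ) (a : ℂ) :
    fock d p (C a * q) = conj a * fock d p q := by
  rw [fock_eq_left, fock_eq_left, Finset.mul_sum]
  exact Finset.sum_congr rfl fun α _ => by rw [coeff_C_mul, map_mul]; ring

lemma fock_sum_right {ι : Type*} (p : MvPolynomial (Fin d) ℂ) (s : Finset ι)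
    (q : ι → MvPolynomial (Fin d) ℂ) :
    fock d p (∑ i ∈ s, q i) = ∑ i ∈ s, fock d p (q i) := by
  simp only [fock_eq_left, MvPolynomial.coeff_sum, map_sum, Finset.mul_sum]
  rw [Finset.sum_comm]

lemma fock_sum_left {ι : Type*} (s : Finset ι) (p : ι → MvPolynomial (Fin d) ℂ)
    (q : MvPolynomial (Fin d) ℂ) :
    fock d (∑ i ∈ s, p i) q = ∑ i ∈ s, fock d (p i) q := by
  simp only [fock_eq_right, MvPolynomial.coeff_sum, Finset.sum_mul, Finset.mul_sum]
  rw [Finset.sum_comm]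

lemma fock_zero_left (q : MvPolynomial (Fin d) ℂ) : fock d 0 q = 0 := by
  simp [fock_eq_left]


lemma fact_prod_add_single (s : Fin d →₀ ℕ) (i : Fin d) :
    (∏ j, ((s + Finsupp.single i 1 : Fin d →₀ ℕ) j).factorial : ℕ)
      = (s i + 1) * ∏ j, (s j).factorial := by
  rw [← Finset.mul_prod_erase Finset.univ _ (Finset.mem_univ i),
      ← Finset.mul_prod_erase Finset.univ (fun j => (s j).factorial) (Finset.mem_univ i)]
  have h1 : ∀ j ∈ Finset.univ.erase i,
      ((s + Finsupp.single i 1 : Fin d →₀ ℕ) j).factorial = (s j).factorial := fun j hj => by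
    rw [Finsupp.add_apply, Finsupp.single_apply,
      if_neg (Ne.symm (Finset.mem_erase.mp hj).1), add_zero]
  rw [Finset.prod_congr rfl h1, Finsupp.add_apply, Finsupp.single_apply, if_pos rfl,
    Nat.factorial_succ, mul_assoc]

lemma fock_monomial (s t : Fin d →₀ ℕ) (a b : ℂ) :
    fock d (monomial s a) (monomial t b)
      = if s = t then ((∏ i, (s i).factorial : ℕ) : ℂ) * a * conj b else 0 := by
  rw [fock_subset_left (t := {s}) _ (MvPolynomial.support_monomial_subset)]
  rw [Finset.sum_singleton, MvPolynomial.coeff_monomial, MvPolynomial.coeff_monomial]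
  by_cases h : s = t
  · simp [h]
  · simp [h, Ne.symm h, if_neg]

lemma fock_monomial_X_mul (i : Fin d) (s t : Fin d →₀ ℕ) (a b : ℂ) :
    fock d (X i * monomial s a) (monomial t b)
      = fock d (monomial s a) (pderiv i (monomial t b)) := by
  rw [show (X i * monomial s a : MvPolynomial (Fin d) ℂ)
      = monomial (s + Finsupp.single i 1) a from by
    rw [X, monomial_mul, one_mul, add_comm]]
  rw [pderiv_monomial, fock_monomial, fock_monomial]
  by_cases h : s + Finsupp.single i 1 = t
  · have hti : t i = s i + 1 := by
      rw [← h, Finsupp.add_apply, Finsupp.single_apply, if_pos rfl]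
    have hs : s = t - Finsupp.single i 1 := by
      rw [← h, add_tsub_cancel_right]
    rw [if_pos h, if_pos hs, fact_prod_add_single]
    rw [map_mul, map_natCast, hti]
    push_cast
    ring
  · rw [if_neg h]
    by_cases hs : s = t - Finsupp.single i 1
    · by_cases hti : t i = 0
      · simp [hs, hti]
      · exfalso
        apply h
        rw [hs, tsub_add_cancel_of_le]
        rwa [Finsupp.single_le_iff, Nat.one_le_iff_ne_zero]
    · rw [if_neg hs]


lemma homog_support_sum {p : MvPolynomial (Fin d) ℂ} {n : ℕ} (hp : p.IsHomogeneous n)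
    {s : Fin d →₀ ℕ} (hs : s ∈ p.support) : ∑ i, s i = n := by
  have h := hp (MvPolynomial.mem_support_iff.mp hs)
  change (Finsupp.weight (fun _ => 1)) s = n at h
  rw [← Finsupp.degree_eq_weight_one] at h
  rw [← h, Finsupp.degree]
  exact (Finset.sum_subset (Finset.subset_univ _)
    (fun x _ hx => Finsupp.notMem_support_iff.mp hx)).symm

lemma eval_prod_univ (w : Fin d → ℂ) (s : Fin d →₀ ℕ) :
    eval w (monomial s (1 : ℂ)) = ∏ i, w i ^ s i := by
  rw [eval_monomial, one_mul]
  exact Finsupp.prod_fintype _ _ fun i => pow_zero _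

-- Euler at w
lemma euler_at {n : ℕ} (w : Fin d → ℂ) (p : MvPolynomial (Fin d) ℂ)
    (hp : p.IsHomogeneous n) :
    ∑ k, w k * eval w (pderiv k p) = (n : ℂ) * eval w p := by
  conv_lhs => rw [p.as_sum]
  conv_rhs => rw [p.as_sum]
  simp only [map_sum, Finset.mul_sum]
  rw [Finset.sum_comm]
  refine Finset.sum_congr rfl fun s hs => ?_
  have hdeg : ∑ i, s i = n := homog_support_sum hp hs
  have key : ∀ k, w k * eval w (pderiv k (monomial s (p.coeff s)))
      = p.coeff s * (s k : ℂ) * ∏ i, w i ^ s i := by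
    intro k
    rw [pderiv_monomial, eval_monomial,
      Finsupp.prod_fintype _ _ (fun i => pow_zero _)]
    by_cases hk : s k = 0
    · simp [hk]
    · have h1 : ∀ j ∈ Finset.univ.erase k,
          w j ^ ((s - Finsupp.single k 1 : Fin d →₀ ℕ) j) = w j ^ s j := fun j hj => by
        rw [Finsupp.tsub_apply, Finsupp.single_apply,
          if_neg (Ne.symm (Finset.mem_erase.mp hj).1), Nat.sub_zero]
      rw [← Finset.mul_prod_erase Finset.univ _ (Finset.mem_univ k),
        Finset.prod_congr rfl h1, Finsupp.tsub_apply, Finsupp.single_apply, if_pos rfl]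
      rw [← Finset.mul_prod_erase Finset.univ (fun j => w j ^ s j) (Finset.mem_univ k)]
      have hw : w k * w k ^ (s k - 1) = w k ^ s k := by
        conv_rhs => rw [← Nat.succ_pred_eq_of_ne_zero hk]
        rw [pow_succ', Nat.pred_eq_sub_one]
      rw [← hw]
      ring
  rw [Finset.sum_congr rfl fun k _ => key k, ← Finset.sum_mul]
  rw [eval_monomial, Finsupp.prod_fintype _ _ (fun i => pow_zero _)]
  have hsum : (∑ i, (p.coeff s * (s i : ℂ))) = p.coeff s * (n : ℂ) := by
    rw [← Finset.mul_sum, ← Nat.cast_sum, hdeg]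
  rw [hsum]
  ring

lemma fock_X_mul_left (i : Fin d) (p q : MvPolynomial (Fin d) ℂ) :
    fock d (X i * p) q = fock d p (pderiv i q) := by
  conv_lhs => rw [p.as_sum, q.as_sum]
  conv_rhs => rw [p.as_sum, q.as_sum]
  rw [Finset.mul_sum, fock_sum_left, fock_sum_left, map_sum]
  refine Finset.sum_congr rfl fun s _ => ?_
  rw [fock_sum_right, fock_sum_right]
  exact Finset.sum_congr rfl fun t _ => fock_monomial_X_mul i s t _ _

lemma fock_X_mul_right (i : Fin d) (p q : MvPolynomial (Fin d) ℂ) :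
    fock d p (X i * q) = fock d (pderiv i p) q := by
  rw [fock_conj, fock_X_mul_left, ← fock_conj]

lemma isHomogeneous_pderiv {p : MvPolynomial (Fin d) ℂ} {n : ℕ}
    (hp : p.IsHomogeneous (n + 1)) (i : Fin d) : (pderiv i p).IsHomogeneous n := by
  conv_lhs => rw [p.as_sum]
  rw [map_sum]
  refine IsHomogeneous.sum _ _ _ fun s hs => ?_
  rw [pderiv_monomial]
  by_cases hk : s i = 0
  · rw [hk]
    simp only [Nat.cast_zero, mul_zero, map_zero]
    exact isHomogeneous_zero _ _ _
  · refine isHomogeneous_monomial _ ?_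
    have h2 : ∑ j, s j = n + 1 := homog_support_sum hp hs
    have e1 : ∀ j ∈ Finset.univ.erase i,
        (s - Finsupp.single i 1 : Fin d →₀ ℕ) j = s j := fun j hj => by
      rw [Finsupp.tsub_apply, Finsupp.single_apply,
        if_neg (Ne.symm (Finset.mem_erase.mp hj).1), Nat.sub_zero]
    have hdeg : (s - Finsupp.single i 1 : Fin d →₀ ℕ).degree
        = ∑ j, (s - Finsupp.single i 1 : Fin d →₀ ℕ) j := by
      rw [Finsupp.degree]
      exact Finset.sum_subset (Finset.subset_univ _)
        (fun x _ hx => Finsupp.notMem_support_iff.mp hx)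
    have hsplit : ∀ f : Fin d → ℕ,
        ∑ j, f j = f i + ∑ j ∈ Finset.univ.erase i, f j :=
      fun f => (Finset.add_sum_erase _ f (Finset.mem_univ i)).symm
    rw [hdeg, hsplit, Finset.sum_congr rfl e1, Finsupp.tsub_apply,
      Finsupp.single_apply, if_pos rfl]
    rw [hsplit (fun j => s j)] at h2
    change s i - 1 + ∑ j ∈ Finset.univ.erase i, s j = n
    omega

lemma fock_one (p : MvPolynomial (Fin d) ℂ) : fock d p 1 = p.coeff 0 := by
  have h1 : (1 : MvPolynomial (Fin d) ℂ).support ⊆ {0} := by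
    rw [show (1 : MvPolynomial (Fin d) ℂ) = monomial 0 1 from C_1.symm.trans (C_apply)]
    exact support_monomial_subset
  rw [fock_subset_right p h1, Finset.sum_singleton]
  simp

lemma eval_homog_zero (w : Fin d → ℂ) {p : MvPolynomial (Fin d) ℂ}
    (hp : p.IsHomogeneous 0) : eval w p = p.coeff 0 := by
  have hss : p.support ⊆ {0} := fun s hs => Finset.mem_singleton.mpr (by
    ext i
    exact (Finset.sum_eq_zero_iff.mp (homog_support_sum hp hs)) i (Finset.mem_univ i))
  conv_lhs => rw [p.as_sum]
  rw [map_sum, Finset.sum_subset hss (fun x _ hx => by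
    rw [MvPolynomial.notMem_support_iff.mp hx]; simp)]
  rw [Finset.sum_singleton]
  simp

lemma fock_S_pow (w : Fin d → ℂ) (ℓ : ℕ) :
    ∀ p : MvPolynomial (Fin d) ℂ, p.IsHomogeneous ℓ →
    fock d p ((∑ k, C (conj (w k)) * X k) ^ ℓ) = (ℓ.factorial : ℂ) * eval w p := by
  induction ℓ with
  | zero =>
    intro p hp
    rw [pow_zero, fock_one, eval_homog_zero w hp]
    simp
  | succ ℓ ih =>
    intro p hp
    rw [pow_succ', Finset.sum_mul, fock_sum_right]
    have step : ∀ k, fock d p (C (conj (w k)) * X k * ((∑ k, C (conj (w k)) * X k) ^ ℓ))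
        = w k * ((ℓ.factorial : ℂ) * eval w (pderiv k p)) := by
      intro k
      rw [mul_assoc, fock_C_mul_right, Complex.conj_conj, fock_X_mul_right,
        ih _ (isHomogeneous_pderiv hp k)]
    rw [Finset.sum_congr rfl (fun k _ => step k)]
    have hre : ∑ k, w k * ((ℓ.factorial : ℂ) * eval w (pderiv k p))
        = (ℓ.factorial : ℂ) * ∑ k, w k * eval w (pderiv k p) := by
      rw [Finset.mul_sum]
      exact Finset.sum_congr rfl fun k _ => by ring
    rw [hre, euler_at w p hp, Nat.factorial_succ]
    push_cast
    ring

/-- `K̃_ℓ(z,w) = (ℓ/((ℓ+1)ℓ!)) ⟨z,w⟩^{ℓ-1} (⟨z,w⟩ I_d − w̄ zᵀ)` (here `ℓ = m+1`)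
is the reproducing kernel of `V_ℓ = {f ∈ ℂ^d ⊗ P_ℓ : Σᵢ zᵢ fᵢ = 0}`: each `K̃_ℓ(·,w)ζ`
lies in `V_ℓ`, and `⟨f, K̃_ℓ(·,w)ζ⟩ = ⟨f(w), ζ⟩` for all `f ∈ V_ℓ`. -/
theorem stmt9 (d m : ℕ) (w ζ : Fin d → ℂ) :
    let S : MvPolynomial (Fin d) ℂ := ∑ k, C (conj (w k)) * X k
    let coef : ℂ := ((m + 1 : ℕ) : ℂ) / (((m + 2 : ℕ) : ℂ) * ((m + 1).factorial : ℂ))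
    let comp : Fin d → MvPolynomial (Fin d) ℂ := fun j =>
      C coef * S ^ m * (S * C (ζ j) - C (conj (w j)) * ∑ i, C (ζ i) * X i)
    (∀ j, (comp j).IsHomogeneous (m + 1)) ∧
    (∑ j, X j * comp j) = 0 ∧
    ∀ f : Fin d → MvPolynomial (Fin d) ℂ, (∀ j, (f j).IsHomogeneous (m + 1)) →
      (∑ j, X j * f j) = 0 →
      (∑ j, fock d (f j) (comp j)) = ∑ j, eval w (f j) * conj (ζ j) := by
  intro S coef comp
  have hS1 : S.IsHomogeneous 1 :=
    IsHomogeneous.sum _ _ _ fun k _ => isHomogeneous_C_mul_X _ _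
  have hT1 : (∑ i, C (ζ i) * X i : MvPolynomial (Fin d) ℂ).IsHomogeneous 1 :=
    IsHomogeneous.sum _ _ _ fun k _ => isHomogeneous_C_mul_X _ _
  refine ⟨?_, ?_, ?_⟩
  · -- homogeneity
    intro j
    have h1 : (S * C (ζ j)).IsHomogeneous 1 := by
      simpa using hS1.mul (isHomogeneous_C _ (ζ j))
    have h2 : (C (conj (w j)) * ∑ i, C (ζ i) * X i :
        MvPolynomial (Fin d) ℂ).IsHomogeneous 1 := by
      simpa using (isHomogeneous_C _ (conj (w j))).mul hT1
    have h3 : (S ^ m).IsHomogeneous m := by simpa using hS1.pow m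
    have h4 := ((isHomogeneous_C _ coef).mul h3).mul (h1.sub h2)
    simpa using h4
  · -- sum is zero
    calc ∑ j, X j * comp j
        = ∑ j, (C coef * S ^ m * S * (C (ζ j) * X j)
            - C coef * S ^ m * (∑ i, C (ζ i) * X i) * (C (conj (w j)) * X j)) :=
          Finset.sum_congr rfl fun j _ => by show X j * comp j = _; simp only [comp]; ring
      _ = C coef * S ^ m * S * (∑ j, C (ζ j) * X j)
            - C coef * S ^ m * (∑ i, C (ζ i) * X i) * (∑ j, C (conj (w j)) * X j) := by
          rw [Finset.sum_sub_distrib, ← Finset.mul_sum, ← Finset.mul_sum]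
      _ = 0 := by
          rw [show (∑ j, C (conj (w j)) * X j : MvPolynomial (Fin d) ℂ) = S from rfl]
          ring
  · -- reproducing property
    intro f hf hX
    set T : MvPolynomial (Fin d) ℂ := ∑ i, C (ζ i) * X i with hTdef
    have kernel : ∀ j, fock d (f j) (S ^ (m + 1))
        = (((m + 1).factorial : ℕ) : ℂ) * eval w (f j) :=
      fun j => fock_S_pow w (m + 1) (f j) (hf j)
    have hpS : ∀ j, pderiv j S = C (conj (w j)) := by
      intro j
      show pderiv j (∑ k, C (conj (w k)) * X k) = C (conj (w j))
      rw [map_sum]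
      rw [Finset.sum_congr rfl fun k _ => pderiv_C_mul (a := conj (w k)) (i := j)]
      simp [Pi.single_apply, mul_ite, Finset.sum_ite_eq']
    have hpT : ∀ j, pderiv j T = C (ζ j) := by
      intro j
      show pderiv j (∑ k, C (ζ k) * X k) = C (ζ j)
      rw [map_sum]
      rw [Finset.sum_congr rfl fun k _ => pderiv_C_mul (a := ζ k) (i := j)]
      simp [Pi.single_apply, mul_ite, Finset.sum_ite_eq']
    have hpu : ∀ j, pderiv j (S ^ (m + 1) * T)
        = C (((m + 1 : ℕ) : ℂ) * conj (w j)) * (S ^ m * T) + C (ζ j) * S ^ (m + 1) := by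
      intro j
      rw [pderiv_mul, pderiv_pow, hpS, hpT,
        show ((m + 1 : ℕ) : MvPolynomial (Fin d) ℂ) = C (((m + 1 : ℕ) : ℂ)) from
          (map_natCast C (m + 1)).symm,
        Nat.add_sub_cancel, map_mul]
      ring
    have h0 : ∑ j, fock d (f j) (pderiv j (S ^ (m + 1) * T)) = 0 := by
      calc ∑ j, fock d (f j) (pderiv j (S ^ (m + 1) * T))
          = ∑ j, fock d (X j * f j) (S ^ (m + 1) * T) :=
            Finset.sum_congr rfl fun j _ => (fock_X_mul_left j (f j) _).symm
        _ = fock d (∑ j, X j * f j) (S ^ (m + 1) * T) :=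
            (fock_sum_left _ _ _).symm
        _ = 0 := by rw [hX, fock_zero_left]
    have h1 : ∀ j, fock d (f j) (pderiv j (S ^ (m + 1) * T))
        = ((m + 1 : ℕ) : ℂ) * (w j * fock d (f j) (S ^ m * T))
          + conj (ζ j) * ((((m + 1).factorial : ℕ) : ℂ) * eval w (f j)) := by
      intro j
      rw [hpu j, fock_add_right, fock_C_mul_right, fock_C_mul_right, kernel j,
        map_mul, Complex.conj_conj, map_natCast]
      ring
    rw [Finset.sum_congr rfl fun j _ => h1 j, Finset.sum_add_distrib,
      ← Finset.mul_sum] at h0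
    have hB : ∑ j, conj (ζ j) * ((((m + 1).factorial : ℕ) : ℂ) * eval w (f j))
        = (((m + 1).factorial : ℕ) : ℂ) * ∑ j, eval w (f j) * conj (ζ j) := by
      rw [Finset.mul_sum]
      exact Finset.sum_congr rfl fun j _ => by ring
    rw [hB] at h0
    have hcc : conj coef = coef := by
      show conj (((m + 1 : ℕ) : ℂ) / (((m + 2 : ℕ) : ℂ) * ((m + 1).factorial : ℂ))) = _
      rw [map_div₀, map_mul, map_natCast, map_natCast, map_natCast]
    have hcomp : ∀ j, fock d (f j) (comp j)
        = coef * (conj (ζ j) * ((((m + 1).factorial : ℕ) : ℂ) * eval w (f j))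
            - w j * fock d (f j) (S ^ m * T)) := by
      intro j
      have hrw : comp j = C (coef * ζ j) * S ^ (m + 1)
          - C (coef * conj (w j)) * (S ^ m * T) := by
        show C coef * S ^ m * (S * C (ζ j) - C (conj (w j)) * T) = _
        rw [map_mul, map_mul]
        ring
      rw [hrw, fock_sub_right, fock_C_mul_right, fock_C_mul_right, kernel j,
        map_mul, map_mul, hcc, Complex.conj_conj]
      ring
    rw [Finset.sum_congr rfl fun j _ => hcomp j, ← Finset.mul_sum,
      Finset.sum_sub_distrib, hB]
    have hc2 : ((m + 2 : ℕ) : ℂ) ≠ 0 := Nat.cast_ne_zero.mpr (by omega)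
    have hc3 : (((m + 1).factorial : ℕ) : ℂ) ≠ 0 :=
      Nat.cast_ne_zero.mpr (Nat.factorial_ne_zero _)
    show coef * _ = _
    simp only [coef]
    set B := ∑ j, eval w (f j) * conj (ζ j)
    set A := ∑ j, w j * fock d (f j) (S ^ m * T)
    rw [div_mul_eq_mul_div, div_eq_iff (mul_ne_zero hc2 hc3)]
    push_cast at h0 ⊢
    linear_combination (-1 : ℂ) * h0
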